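/- Let μ: ℝ → ℝ be continuously differentiable with derivative μ̇, let Θ ⊆ ℝ^d be convex, let S be a finite set of vectors in ℝ^d, let m_a > 0 for each a ∈ S, and suppose Ṽ = Σ_{a∈S} m_a a a' is positive definite with positive-definite square root Ṽ^{1/2}. Define h(θ) = Σ_{a∈S} m_a μ(⟨θ, a⟩) a, and assume there is k₁ > 0 such that μ̇(⟨θ, a⟩) ≥ k₁ for all θ ∈ Θ and all a ∈ S. Let θ*, θ̂ ∈ Θ, X ∈ ℝ^d, and E ≥ 0 satisfy h(θ̂) = Ṽ^{1/2} X and ‖X − Ṽ^{-1/2} h(θ*)‖ ≤ E. Then for every a ∈ ℝ^d, |⟨θ̂ − θ*, a⟩| ≤ (E / k₁) · √(a' Ṽ^{-1} a). -/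

import Mathlib

open Matrix

namespace Matrix.PosSemidef

open scoped ComplexOrder

/-- The positive semidefinite square root of a positive semidefinite matrix, as defined in the
older Mathlib (removed since). -/
noncomputable def sqrt {n 𝕜 : Type*} [Fintype n] [DecidableEq n] [RCLike 𝕜] {A : Matrix n n 𝕜}
    (hA : A.PosSemidef) : Matrix n n 𝕜 :=
  hA.1.eigenvectorUnitary.1 * diagonal ((↑) ∘ (√·) ∘ hA.1.eigenvalues) *
    (star hA.1.eigenvectorUnitary : Matrix n n 𝕜)

end Matrix.PosSemidef

lemma psd_sqrt_mul_self {d : ℕ} {A : Matrix (Fin d) (Fin d) ℝ} (hA : A.PosSemidef) :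
    Matrix.PosSemidef.sqrt hA * Matrix.PosSemidef.sqrt hA = A := by
  have hU' : ∀ M : Matrix (Fin d) (Fin d) ℝ,
      (star hA.1.eigenvectorUnitary : Matrix (Fin d) (Fin d) ℝ) *
        ((hA.1.eigenvectorUnitary : Matrix (Fin d) (Fin d) ℝ) * M) = M := by
    intro M
    rw [← Matrix.mul_assoc, Unitary.coe_star_mul_self, Matrix.one_mul]
  have hD : diagonal (RCLike.ofReal ∘ (√·) ∘ hA.1.eigenvalues : Fin d → ℝ) *
      diagonal (RCLike.ofReal ∘ (√·) ∘ hA.1.eigenvalues : Fin d → ℝ)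
      = diagonal (RCLike.ofReal ∘ hA.1.eigenvalues : Fin d → ℝ) := by
    rw [diagonal_mul_diagonal]
    congr 1
    funext i
    simp [Real.mul_self_sqrt (hA.eigenvalues_nonneg i)]
  conv_rhs => rw [hA.1.spectral_theorem, Unitary.conjStarAlgAut_apply]
  simp only [Matrix.PosSemidef.sqrt]
  rw [← hD]
  simp only [Matrix.mul_assoc, hU']

lemma psd_sqrt_transpose {d : ℕ} {A : Matrix (Fin d) (Fin d) ℝ} (hA : A.PosSemidef) :
    (Matrix.PosSemidef.sqrt hA)ᵀ = Matrix.PosSemidef.sqrt hA := by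
  have : (Matrix.PosSemidef.sqrt hA)ᴴ = Matrix.PosSemidef.sqrt hA := by
    simp [Matrix.PosSemidef.sqrt, conjTranspose_mul, Matrix.mul_assoc, star_eq_conjTranspose,
      conjTranspose_eq_transpose_of_trivial, transpose_transpose]
  simpa [conjTranspose_eq_transpose_of_trivial] using this

lemma dot_self_nonneg' {d : ℕ} (u : Fin d → ℝ) : 0 ≤ u ⬝ᵥ u :=
  Finset.sum_nonneg fun i _ => mul_self_nonneg _

lemma dot_cauchy {d : ℕ} (u v : Fin d → ℝ) :
    |u ⬝ᵥ v| ≤ Real.sqrt (u ⬝ᵥ u) * Real.sqrt (v ⬝ᵥ v) := by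
  have h1 : (u ⬝ᵥ v) ^ 2 ≤ (u ⬝ᵥ u) * (v ⬝ᵥ v) := by
    have := Finset.sum_mul_sq_le_sq_mul_sq Finset.univ u v
    simpa [dotProduct, sq] using this
  calc |u ⬝ᵥ v| = Real.sqrt ((u ⬝ᵥ v) ^ 2) := (Real.sqrt_sq_eq_abs _).symm
    _ ≤ Real.sqrt ((u ⬝ᵥ u) * (v ⬝ᵥ v)) := Real.sqrt_le_sqrt h1
    _ = Real.sqrt (u ⬝ᵥ u) * Real.sqrt (v ⬝ᵥ v) := Real.sqrt_mul (dot_self_nonneg' u) _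

lemma symm_dot {d : ℕ} {M : Matrix (Fin d) (Fin d) ℝ} (hM : Mᵀ = M)
    (u w : Fin d → ℝ) : u ⬝ᵥ (M *ᵥ w) = (M *ᵥ u) ⬝ᵥ w := by
  rw [Matrix.dotProduct_mulVec, ← Matrix.mulVec_transpose, hM]

lemma smul_vmv_mulVec {d : ℕ} (c : ℝ) (b v : Fin d → ℝ) :
    (c • vecMulVec b b) *ᵥ v = (c * (b ⬝ᵥ v)) • b := by
  ext i
  simp [Matrix.mulVec, dotProduct, vecMulVec, Finset.mul_sum]
  rw [Finset.sum_mul]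
  exact Finset.sum_congr rfl fun j _ => by ring

lemma sum_mulVec' {d : ℕ} {ι : Type*} (S : Finset ι) (M : ι → Matrix (Fin d) (Fin d) ℝ)
    (v : Fin d → ℝ) : (∑ b ∈ S, M b) *ᵥ v = ∑ b ∈ S, (M b *ᵥ v) := by
  ext i
  simp only [Matrix.mulVec, dotProduct, Matrix.sum_apply, Finset.sum_apply,
    Finset.sum_mul]
  rw [Finset.sum_comm]

lemma dot_sum' {d : ℕ} {ι : Type*} (S : Finset ι) (u : Fin d → ℝ) (f : ι → (Fin d → ℝ)) :
    u ⬝ᵥ (∑ b ∈ S, f b) = ∑ b ∈ S, u ⬝ᵥ f b := by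
  simp [dotProduct, Finset.sum_apply, Finset.mul_sum]
  exact Finset.sum_comm

/-- If `h(θ̂) = Ṽ^{1/2} X` and `‖X − Ṽ^{-1/2} h(θ*)‖ ≤ E`, then for every
vector `a`, `|⟨θ̂ − θ*, a⟩| ≤ (E/k₁) √(a' Ṽ⁻¹ a)`. Euclidean norms are written via
`√(w ⬝ᵥ w)`, and `Ṽ^{1/2}` is the positive-definite square root of `Ṽ`. -/
theorem stmt8 (d : ℕ) (μ : ℝ → ℝ) (hμ : ContDiff ℝ 1 μ)
    (Θ : Set (Fin d → ℝ)) (hΘ : Convex ℝ Θ)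
    (S : Finset (Fin d → ℝ)) (m : (Fin d → ℝ) → ℝ) (hm : ∀ a ∈ S, 0 < m a)
    (Vt : Matrix (Fin d) (Fin d) ℝ)
    (hVt_def : Vt = ∑ a ∈ S, m a • vecMulVec a a) (hVt : Vt.PosDef)
    (h : (Fin d → ℝ) → (Fin d → ℝ))
    (h_def : ∀ θ, h θ = ∑ a ∈ S, (m a * μ (θ ⬝ᵥ a)) • a)
    (k₁ : ℝ) (hk₁ : 0 < k₁)
    (hderiv : ∀ θ ∈ Θ, ∀ a ∈ S, k₁ ≤ deriv μ (θ ⬝ᵥ a))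
    (θstar θhat : Fin d → ℝ) (hθstar : θstar ∈ Θ) (hθhat : θhat ∈ Θ)
    (X : Fin d → ℝ) (E : ℝ) (hE : 0 ≤ E)
    (hX : h θhat = Matrix.PosSemidef.sqrt hVt.posSemidef *ᵥ X)
    (hXE : Real.sqrt ((X - (Matrix.PosSemidef.sqrt hVt.posSemidef)⁻¹ *ᵥ h θstar) ⬝ᵥ
              (X - (Matrix.PosSemidef.sqrt hVt.posSemidef)⁻¹ *ᵥ h θstar)) ≤ E)
    (a : Fin d → ℝ) :
    |(θhat - θstar) ⬝ᵥ a| ≤ (E / k₁) * Real.sqrt (a ⬝ᵥ (Vt⁻¹ *ᵥ a)) := by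
  have hμc : Continuous μ := hμ.continuous
  have hμd : Differentiable ℝ μ := hμ.differentiable one_ne_zero
  set R := Matrix.PosSemidef.sqrt hVt.posSemidef with hRdef
  set Δ := θhat - θstar with hΔdef
  set w := X - R⁻¹ *ᵥ h θstar with hwdef
  -- MVT step
  have main : ∀ x ∈ Θ, ∀ y ∈ Θ, ∀ b ∈ S, x ⬝ᵥ b < y ⬝ᵥ b →
      k₁ * (y ⬝ᵥ b - x ⬝ᵥ b) ^ 2 ≤ (μ (y ⬝ᵥ b) - μ (x ⬝ᵥ b)) * (y ⬝ᵥ b - x ⬝ᵥ b) := by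
    intro x hx y hy b hb hlt
    obtain ⟨c, hc, hcd⟩ :=
      exists_deriv_eq_slope μ hlt hμc.continuousOn hμd.differentiableOn
    set t := (c - x ⬝ᵥ b) / (y ⬝ᵥ b - x ⬝ᵥ b) with ht
    have hpos : 0 < y ⬝ᵥ b - x ⬝ᵥ b := by linarith
    have ht0 : 0 ≤ t := div_nonneg (by linarith [hc.1]) (by linarith)
    have ht1 : t ≤ 1 := by
      rw [div_le_one hpos]; linarith [hc.2]
    have hmem : (1 - t) • x + t • y ∈ Θ := hΘ hx hy (by linarith) ht0 (by ring)
    have hdot : ((1 - t) • x + t • y) ⬝ᵥ b = c := by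
      rw [add_dotProduct, smul_dotProduct, smul_dotProduct,
        smul_eq_mul, smul_eq_mul, ht]
      field_simp
      ring
    have hk : k₁ ≤ deriv μ c := by
      have := hderiv _ hmem b hb
      rwa [hdot] at this
    rw [hcd, le_div_iff₀ hpos] at hk
    nlinarith [sq_nonneg (y ⬝ᵥ b - x ⬝ᵥ b)]
  have per : ∀ b ∈ S, k₁ * (Δ ⬝ᵥ b) ^ 2 ≤ (μ (θhat ⬝ᵥ b) - μ (θstar ⬝ᵥ b)) * (Δ ⬝ᵥ b) := by
    intro b hb
    have hΔb : Δ ⬝ᵥ b = θhat ⬝ᵥ b - θstar ⬝ᵥ b := sub_dotProduct _ _ _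
    rcases lt_trichotomy (θstar ⬝ᵥ b) (θhat ⬝ᵥ b) with hlt | heq | hgt
    · rw [hΔb]; exact main θstar hθstar θhat hθhat b hb hlt
    · rw [hΔb, heq]; simp
    · have hmm := main θhat hθhat θstar hθstar b hb hgt
      rw [hΔb]
      calc k₁ * (θhat ⬝ᵥ b - θstar ⬝ᵥ b) ^ 2
          = k₁ * (θstar ⬝ᵥ b - θhat ⬝ᵥ b) ^ 2 := by ring
        _ ≤ (μ (θstar ⬝ᵥ b) - μ (θhat ⬝ᵥ b)) * (θstar ⬝ᵥ b - θhat ⬝ᵥ b) := hmm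
        _ = (μ (θhat ⬝ᵥ b) - μ (θstar ⬝ᵥ b)) * (θhat ⬝ᵥ b - θstar ⬝ᵥ b) := by ring
  -- quadratic form identity
  have hquad : Δ ⬝ᵥ (Vt *ᵥ Δ) = ∑ b ∈ S, m b * (Δ ⬝ᵥ b) ^ 2 := by
    rw [hVt_def, sum_mulVec', dot_sum']
    refine Finset.sum_congr rfl fun b _ => ?_
    rw [smul_vmv_mulVec, dotProduct_smul, smul_eq_mul, dotProduct_comm b Δ]
    ring
  -- sum identity for h difference
  have hsum : Δ ⬝ᵥ (h θhat - h θstar)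
      = ∑ b ∈ S, m b * (μ (θhat ⬝ᵥ b) - μ (θstar ⬝ᵥ b)) * (Δ ⬝ᵥ b) := by
    rw [h_def, h_def, ← Finset.sum_sub_distrib, dot_sum']
    refine Finset.sum_congr rfl fun b _ => ?_
    rw [dotProduct_sub, dotProduct_smul, dotProduct_smul,
      smul_eq_mul, smul_eq_mul]
    ring
  have lower : k₁ * (Δ ⬝ᵥ (Vt *ᵥ Δ)) ≤ Δ ⬝ᵥ (h θhat - h θstar) := by
    rw [hquad, hsum, Finset.mul_sum]
    refine Finset.sum_le_sum fun b hb => ?_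
    have h1 := per b hb
    have h2 := (hm b hb).le
    calc k₁ * (m b * (Δ ⬝ᵥ b) ^ 2) = m b * (k₁ * (Δ ⬝ᵥ b) ^ 2) := by ring
      _ ≤ m b * ((μ (θhat ⬝ᵥ b) - μ (θstar ⬝ᵥ b)) * (Δ ⬝ᵥ b)) :=
          mul_le_mul_of_nonneg_left h1 h2
      _ = m b * (μ (θhat ⬝ᵥ b) - μ (θstar ⬝ᵥ b)) * (Δ ⬝ᵥ b) := by ring
  -- matrix facts
  have hRR : R * R = Vt := psd_sqrt_mul_self hVt.posSemidef
  have hRsymm : Rᵀ = R := by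
    exact psd_sqrt_transpose hVt.posSemidef
  have hdetV : Vt.det ≠ 0 := hVt.det_pos.ne'
  have hdet : IsUnit R.det := by
    refine isUnit_iff_ne_zero.2 fun h0 => hdetV ?_
    rw [← hRR, Matrix.det_mul, h0, mul_zero]
  have hRRinv : R * R⁻¹ = 1 := Matrix.mul_nonsing_inv _ hdet
  have hVtinv : Vt⁻¹ = R⁻¹ * R⁻¹ := by rw [← hRR, Matrix.mul_inv_rev]
  have hRinvsymm : (R⁻¹)ᵀ = R⁻¹ := by rw [Matrix.transpose_nonsing_inv, hRsymm]
  have hdiff : h θhat - h θstar = R *ᵥ w := by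
    rw [hwdef, Matrix.mulVec_sub, Matrix.mulVec_mulVec, hRRinv, Matrix.one_mulVec, hX]
  have hRDD : (R *ᵥ Δ) ⬝ᵥ (R *ᵥ Δ) = Δ ⬝ᵥ (Vt *ᵥ Δ) := by
    rw [← symm_dot hRsymm, Matrix.mulVec_mulVec, hRR]
  set s := Real.sqrt (Δ ⬝ᵥ (Vt *ᵥ Δ)) with hsdef
  have hqnn : 0 ≤ Δ ⬝ᵥ (Vt *ᵥ Δ) := hRDD ▸ dot_self_nonneg' _
  have hs2 : s ^ 2 = Δ ⬝ᵥ (Vt *ᵥ Δ) := Real.sq_sqrt hqnn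
  have hub : Δ ⬝ᵥ (h θhat - h θstar) ≤ s * E := by
    rw [hdiff, symm_dot hRsymm]
    calc (R *ᵥ Δ) ⬝ᵥ w ≤ |(R *ᵥ Δ) ⬝ᵥ w| := le_abs_self _
      _ ≤ Real.sqrt ((R *ᵥ Δ) ⬝ᵥ (R *ᵥ Δ)) * Real.sqrt (w ⬝ᵥ w) := dot_cauchy _ _
      _ = s * Real.sqrt (w ⬝ᵥ w) := by rw [hRDD]
      _ ≤ s * E := mul_le_mul_of_nonneg_left hXE (Real.sqrt_nonneg _)
  have hsE : s ≤ E / k₁ := by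
    rcases eq_or_lt_of_le (Real.sqrt_nonneg (Δ ⬝ᵥ (Vt *ᵥ Δ)) : (0:ℝ) ≤ s) with h0 | h0
    · rw [hsdef, ← h0]; positivity
    · rw [le_div_iff₀ hk₁]
      nlinarith [lower, hub, hs2]
  have hfin : Δ ⬝ᵥ a = (R *ᵥ Δ) ⬝ᵥ (R⁻¹ *ᵥ a) := by
    rw [← symm_dot hRsymm, Matrix.mulVec_mulVec, hRRinv, Matrix.one_mulVec]
  have hinva : (R⁻¹ *ᵥ a) ⬝ᵥ (R⁻¹ *ᵥ a) = a ⬝ᵥ (Vt⁻¹ *ᵥ a) := by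
    rw [← symm_dot hRinvsymm, Matrix.mulVec_mulVec, ← hVtinv]
  calc |Δ ⬝ᵥ a| = |(R *ᵥ Δ) ⬝ᵥ (R⁻¹ *ᵥ a)| := by rw [hfin]
    _ ≤ Real.sqrt ((R *ᵥ Δ) ⬝ᵥ (R *ᵥ Δ)) * Real.sqrt ((R⁻¹ *ᵥ a) ⬝ᵥ (R⁻¹ *ᵥ a)) :=
        dot_cauchy _ _
    _ = s * Real.sqrt (a ⬝ᵥ (Vt⁻¹ *ᵥ a)) := by rw [hRDD, hinva]
    _ ≤ (E / k₁) * Real.sqrt (a ⬝ᵥ (Vt⁻¹ *ᵥ a)) :=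
        mul_le_mul_of_nonneg_right hsE (Real.sqrt_nonneg _)
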